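/- Let D be a type, F : Set D → Set D be monotone, H a type with γ : H → Set D, 𝓡 : Set (Set D) a representative set for F (with respect to γ), and B ⊆ 𝓡. Let T = {X : Set D | F X = X ∧ ∀ Y ∈ B, ¬ Y ⊆ X} be the corresponding 𝓡-specification of adequate fixpoints. Then there exists a teacher for this instance: a function τ assigning to every h : H an ICE sample (P, N, I) over 𝓡 such that (progress) if γ h ∈ T then τ h = (∅, ∅, ∅), and if γ h ∉ T then γ h ∉ κ_𝓡 (τ h); and (honesty) T ⊆ κ_𝓡 (τ h) for every h. -/

import Mathlib

/-- Consistency function for ICE samples `(P, N, I)` over sets of configurations: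
a concept `X` must include every positive example, exclude (not include) every
negative example, and be closed under the implications. -/
def iceConsistent {D : Type*} (s : Set (Set D) × Set (Set D) × Set (Set D × Set D)) :
    Set (Set D) :=
  {X : Set D | (∀ Y ∈ s.1, Y ⊆ X) ∧ (∀ Y ∈ s.2.1, ¬ Y ⊆ X) ∧
    (∀ p ∈ s.2.2, p.1 ⊆ X → p.2 ⊆ X)}

/-- for a monotone transformer `F`, a representative set `𝓡`, and a set
`B ⊆ 𝓡` of bad elements, there is a teacher for the `𝓡`-specification of adequate
fixpoints with respect to ICE samples over `𝓡`. -/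
theorem exists_teacher_for_adequate_fixpoints {D H : Type*}
    (F : Set D → Set D) (hF : Monotone F)
    (γ : H → Set D)
    (𝓡 : Set (Set D))
    (hrep : ∀ h : H, F (γ h) ≠ γ h →
      ∃ Y ∈ 𝓡, ∃ Y' ∈ 𝓡, Y ⊆ γ h ∧ Y' ⊆ F Y ∧ ¬ Y' ⊆ γ h)
    (B : Set (Set D)) (hB : B ⊆ 𝓡) :
    ∃ τ : H → Set (Set D) × Set (Set D) × Set (Set D × Set D),
      ∀ h : H,
        (γ h ∈ {X : Set D | F X = X ∧ ∀ Y ∈ B, ¬ Y ⊆ X} → τ h = (∅, ∅, ∅)) ∧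
        (γ h ∉ {X : Set D | F X = X ∧ ∀ Y ∈ B, ¬ Y ⊆ X} → γ h ∉ iceConsistent (τ h)) ∧
        {X : Set D | F X = X ∧ ∀ Y ∈ B, ¬ Y ⊆ X} ⊆ iceConsistent (τ h) := by
  classical
  set T : Set (Set D) := {X : Set D | F X = X ∧ ∀ Y ∈ B, ¬ Y ⊆ X} with hT
  refine ⟨fun h =>
    if hmem : γ h ∈ T then (∅, ∅, ∅)
    else if hbad : ∃ Y ∈ B, Y ⊆ γ h then (∅, {hbad.choose}, ∅)
    else (∅, ∅, {((hrep h (by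
        intro hfix
        exact hmem ⟨hfix, fun Y hY hYs => hbad ⟨Y, hY, hYs⟩⟩)).choose,
      ((hrep h (by
        intro hfix
        exact hmem ⟨hfix, fun Y hY hYs => hbad ⟨Y, hY, hYs⟩⟩)).choose_spec.2).choose)}),
    fun h => ?_⟩
  by_cases hmem : γ h ∈ T
  · refine ⟨fun _ => dif_pos hmem, fun hc => absurd hmem hc, fun X hX => ?_⟩
    simp only [dif_pos hmem]
    exact ⟨fun Y hY => hY.elim, fun Y hY => hY.elim, fun p hp => hp.elim⟩
  · simp only [dif_neg hmem]
    by_cases hbad : ∃ Y ∈ B, Y ⊆ γ h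
    · refine ⟨fun hc => absurd hc hmem, fun _ hc => ?_, fun X hX => ?_⟩
      all_goals simp only [dif_pos hbad] at *
      · exact hc.2.1 hbad.choose rfl hbad.choose_spec.2
      · refine ⟨fun Y hY => hY.elim, fun Y hY hYX => ?_, fun p hp => hp.elim⟩
        rw [Set.mem_singleton_iff] at hY
        subst hY
        exact hX.2 hbad.choose hbad.choose_spec.1 hYX
    · simp only [dif_neg hbad]
      have hne : F (γ h) ≠ γ h := by
        intro hfix
        exact hmem ⟨hfix, fun Y hY hYs => hbad ⟨Y, hY, hYs⟩⟩
      obtain ⟨hY𝓡, Y', hY'𝓡, hYγ, hY'FY, hY'γ⟩ := (hrep h hne).choose_spec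
      set Y := (hrep h hne).choose
      obtain ⟨hY'𝓡', hYγ', hFY', hnY'⟩ := ((hrep h hne).choose_spec.2).choose_spec
      set Y'' := ((hrep h hne).choose_spec.2).choose
      refine ⟨fun hc => absurd hc hmem, fun _ hc => ?_, fun X hX => ?_⟩
      · exact hnY' (hc.2.2 (Y, Y'') rfl hYγ')
      · refine ⟨fun Z hZ => hZ.elim, fun Z hZ => hZ.elim, fun p hp hsub => ?_⟩
        rw [Set.mem_singleton_iff] at hp
        subst hp
        exact fun x hx => hX.1 ▸ hF hsub (hFY' hx)
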